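/- Let (a,c) ∈ ℕ^k × ℕ^k be a pair of multi-indices satisfying the Wishart matching condition. Then #a + #c ≤ d_W(a,c) + 1 ≤ k + 1, where #a denotes the number of distinct values among a_1,...,a_k, and d_W(a,c) is the number of distinct couples appearing in the list (a_1,c_1),(a_2,c_1),(a_2,c_2),(a_3,c_2),...,(a_k,c_k),(a_1,c_k). -/

import Mathlib

/-- The cyclic Wishart list of `2k` couples
`(a₁,c₁), (a₂,c₁), (a₂,c₂), (a₃,c₂), …, (a_k,c_k), (a₁,c_k)`,
indexed by `Fin k × Bool`: position `(i, false)` carries `(aᵢ, cᵢ)` and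
position `(i, true)` carries `(aᵢ₊₁, cᵢ)` (indices mod `k`). -/
def wlist {k : ℕ} [NeZero k] (a c : Fin k → ℕ) (q : Fin k × Bool) : ℕ × ℕ :=
  if q.2 then (a (q.1 + 1), c q.1) else (a q.1, c q.1)

/-- The Wishart matching condition: every couple appears an even number of times
in the Wishart list. -/
def WishartMatching {k : ℕ} [NeZero k] (a c : Fin k → ℕ) : Prop :=
  ∀ p : ℕ × ℕ, Even (Nat.card {q : Fin k × Bool // wlist a c q = p})

/-- `#a`, the number of distinct values among the coordinates of `a`. -/
def numDistinct {k : ℕ} (a : Fin k → ℕ) : ℕ := (Finset.univ.image a).card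

/-- `d_W(a,c)`, the number of distinct couples in the Wishart list. -/
def dW {k : ℕ} [NeZero k] (a c : Fin k → ℕ) : ℕ :=
  (Finset.univ.image (wlist a c)).card

open Fin.NatCast

/-- walk vertices -/
def uvert {k : ℕ} [NeZero k] (a c : Fin k → ℕ) (n : ℕ) : ℕ ⊕ ℕ :=
  if Even n then Sum.inl (a ((n/2 : ℕ) : Fin k)) else Sum.inr (c ((n/2 : ℕ) : Fin k))

/-- walk edges -/
def eedge {k : ℕ} [NeZero k] (a c : Fin k → ℕ) (n : ℕ) : ℕ × ℕ :=
  if Even n then (a ((n/2 : ℕ) : Fin k), c ((n/2 : ℕ) : Fin k))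
  else (a (((n/2 : ℕ) : Fin k) + 1), c ((n/2 : ℕ) : Fin k))

lemma eedge_mem_wlist {k : ℕ} [NeZero k] (a c : Fin k → ℕ) (n : ℕ) :
    ∃ q, eedge a c n = wlist a c q := by
  by_cases hn : Even n
  · exact ⟨(((n/2 : ℕ) : Fin k), false), by simp [eedge, wlist, hn]⟩
  · exact ⟨(((n/2 : ℕ) : Fin k), true), by simp [eedge, wlist, hn]⟩

lemma key {k : ℕ} [NeZero k] (a c : Fin k → ℕ) (n : ℕ) :
    (uvert a c n = Sum.inl (eedge a c n).1 ∧ uvert a c (n+1) = Sum.inr (eedge a c n).2) ∨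
    (uvert a c n = Sum.inr (eedge a c n).2 ∧ uvert a c (n+1) = Sum.inl (eedge a c n).1) := by
  rcases Nat.even_or_odd n with hn | hn
  · obtain ⟨m, rfl⟩ := hn
    have h1 : (m + m) / 2 = m := by omega
    have h2 : (m + m + 1) / 2 = m := by omega
    have he : Even (m + m) := ⟨m, rfl⟩
    have ho : ¬ Even (m + m + 1) := by simp [Nat.even_add_one, he]
    left
    constructor
    · simp [uvert, eedge, he, h1]
    · simp [uvert, eedge, he, ho, h1, h2]
  · obtain ⟨m, rfl⟩ := hn
    have ho : ¬ Even (2 * m + 1) := by simp [Nat.even_add_one]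
    have h1 : (2 * m + 1) / 2 = m := by omega
    have h2 : (2 * m + 1 + 1) / 2 = m + 1 := by omega
    have he : Even (2 * m + 1 + 1) := by refine ⟨m + 1, by omega⟩
    right
    constructor
    · simp [uvert, eedge, ho, h1]
    · simp [uvert, eedge, ho, he, h1, h2, Nat.cast_add]

lemma count {k : ℕ} [NeZero k] (a c : Fin k → ℕ) (n : ℕ) :
    ((Finset.range (n+1)).image (uvert a c)).card
      ≤ ((Finset.range n).image (eedge a c)).card + 1 := by
  induction n with
  | zero => simp
  | succ n ih =>
    rw [Finset.range_add_one, Finset.image_insert]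
    by_cases hm : uvert a c (n+1) ∈ (Finset.range (n+1)).image (uvert a c)
    · rw [Finset.insert_eq_self.2 hm]
      exact ih.trans (by
        gcongr
        exact Nat.le_succ n)
    · have hnew : eedge a c n ∉ (Finset.range n).image (eedge a c) := by
        intro hmem
        obtain ⟨j, hj, hje⟩ := Finset.mem_image.1 hmem
        rw [Finset.mem_range] at hj
        have hjv : Sum.inl (eedge a c j).1 ∈ (Finset.range (n+1)).image (uvert a c)
            ∧ Sum.inr (eedge a c j).2 ∈ (Finset.range (n+1)).image (uvert a c) := by
          have hj1 : j ∈ Finset.range (n+1) := Finset.mem_range.2 (by omega)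
          have hj2 : j + 1 ∈ Finset.range (n+1) := Finset.mem_range.2 (by omega)
          rcases key a c j with ⟨h1, h2⟩ | ⟨h1, h2⟩
          · exact ⟨Finset.mem_image.2 ⟨j, hj1, h1⟩, Finset.mem_image.2 ⟨j+1, hj2, h2⟩⟩
          · exact ⟨Finset.mem_image.2 ⟨j+1, hj2, h2⟩, Finset.mem_image.2 ⟨j, hj1, h1⟩⟩
        apply hm
        rcases key a c n with ⟨_, h2⟩ | ⟨_, h2⟩
        · rw [h2, ← hje]; exact hjv.2
        · rw [h2, ← hje]; exact hjv.1
      have hE1 : (Finset.range (n+1)).image (eedge a c)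
          = insert (eedge a c n) ((Finset.range n).image (eedge a c)) := by
        rw [Finset.range_add_one, Finset.image_insert]
      rw [Finset.card_insert_of_notMem hm, hE1, Finset.card_insert_of_notMem hnew]
      omega

theorem wishart_matching_bound {k : ℕ} [NeZero k] (a c : Fin k → ℕ)
    (h : WishartMatching a c) :
    numDistinct a + numDistinct c ≤ dW a c + 1 ∧ dW a c + 1 ≤ k + 1 := by
  have hk : 0 < k := Nat.pos_of_ne_zero (NeZero.ne k)
  constructor
  · -- lower bound
    have hV : ((Finset.univ.image a).map ⟨Sum.inl, Sum.inl_injective⟩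
          ∪ (Finset.univ.image c).map ⟨Sum.inr, Sum.inr_injective⟩)
        ⊆ (Finset.range (2*k)).image (uvert a c) := by
      intro x hx
      rw [Finset.mem_union] at hx
      rcases hx with hx | hx
      · obtain ⟨y, hy, rfl⟩ := Finset.mem_map.1 hx
        obtain ⟨i, _, rfl⟩ := Finset.mem_image.1 hy
        refine Finset.mem_image.2 ⟨2 * i.val, Finset.mem_range.2 (by omega), ?_⟩
        have : (2 * i.val) / 2 = i.val := by omega
        simp [uvert, this, Fin.cast_val_eq_self]
      · obtain ⟨y, hy, rfl⟩ := Finset.mem_map.1 hx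
        obtain ⟨i, _, rfl⟩ := Finset.mem_image.1 hy
        refine Finset.mem_image.2 ⟨2 * i.val + 1, Finset.mem_range.2 (by omega), ?_⟩
        have h1 : ¬ Even (2 * i.val + 1) := by simp [Nat.even_add_one]
        have h2 : (2 * i.val + 1) / 2 = i.val := by omega
        simp [uvert, h1, h2, Fin.cast_val_eq_self]
    have hdisj : Disjoint ((Finset.univ.image a).map ⟨Sum.inl, Sum.inl_injective⟩)
        ((Finset.univ.image c).map ⟨Sum.inr, Sum.inr_injective⟩) := by
      simp [Finset.disjoint_left]
    have hcardV : numDistinct a + numDistinct c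
        = ((Finset.univ.image a).map ⟨Sum.inl, Sum.inl_injective⟩
          ∪ (Finset.univ.image c).map ⟨Sum.inr, Sum.inr_injective⟩).card := by
      rw [Finset.card_union_of_disjoint hdisj, Finset.card_map, Finset.card_map]
      rfl
    have hE : ((Finset.range (2*k-1)).image (eedge a c)).card ≤ dW a c := by
      apply Finset.card_le_card
      intro p hp
      obtain ⟨m, _, rfl⟩ := Finset.mem_image.1 hp
      obtain ⟨q, hq⟩ := eedge_mem_wlist a c m
      exact Finset.mem_image.2 ⟨q, Finset.mem_univ q, hq.symm⟩
    have h2k : 2 * k - 1 + 1 = 2 * k := by omega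
    calc numDistinct a + numDistinct c
        ≤ ((Finset.range (2*k)).image (uvert a c)).card := by
          rw [hcardV]; exact Finset.card_le_card hV
      _ = ((Finset.range (2*k-1+1)).image (uvert a c)).card := by rw [h2k]
      _ ≤ ((Finset.range (2*k-1)).image (eedge a c)).card + 1 := count a c (2*k-1)
      _ ≤ dW a c + 1 := by omega
  · -- upper bound
    have hsum : (Finset.univ : Finset (Fin k × Bool)).card
        = ∑ p ∈ Finset.univ.image (wlist a c),
            (Finset.univ.filter (fun q => wlist a c q = p)).card :=
      Finset.card_eq_sum_card_image (wlist a c) Finset.univ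
    have htot : (Finset.univ : Finset (Fin k × Bool)).card = 2 * k := by
      simp [Fintype.card_prod]; ring
    have hfib : ∀ p ∈ Finset.univ.image (wlist a c),
        2 ≤ (Finset.univ.filter (fun q => wlist a c q = p)).card := by
      intro p hp
      have heven : Even (Finset.univ.filter (fun q => wlist a c q = p)).card := by
        have := h p
        rwa [Nat.card_eq_fintype_card, Fintype.card_subtype] at this
      have hpos : 0 < (Finset.univ.filter (fun q => wlist a c q = p)).card := by
        obtain ⟨q, _, hq⟩ := Finset.mem_image.1 hp
        exact Finset.card_pos.2 ⟨q, Finset.mem_filter.2 ⟨Finset.mem_univ q, hq⟩⟩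
      obtain ⟨m, hm⟩ := heven
      omega
    have : 2 * dW a c ≤ 2 * k := by
      rw [← htot, hsum, dW]
      calc 2 * (Finset.univ.image (wlist a c)).card
          = ∑ _p ∈ Finset.univ.image (wlist a c), 2 := by
            rw [Finset.sum_const, smul_eq_mul, mul_comm]
        _ ≤ _ := Finset.sum_le_sum hfib
    omega
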